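/- arXiv:1104.1054 — 5 statements merged into one kernel-verified Lean document; each statement's English description precedes it below -/
import Mathlib

section
/- The Lenz arrow is compatible with right multiplication: if a → b and ac ≠ 0 and bc ≠ 0, then ac → bc. -/
/-- An inverse semigroup with zero whose natural partial order has binary meets
(an inverse ∧-semigroup with zero). The order `≤` is required to coincide with
the natural partial order: `a ≤ b ↔ a = b * (a⁻¹ * a)`. -/
class InverseMeetSemigroup (S : Type*) extends Semigroup S, Zero S, Inv S, SemilatticeInf S where
  mul_inv_mul : ∀ a : S, a * a⁻¹ * a = a
  inv_mul_inv : ∀ a : S, a⁻¹ * a * a⁻¹ = a⁻¹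
  idem_comm : ∀ e f : S, e * e = e → f * f = f → e * f = f * e
  zero_mul : ∀ a : S, (0 : S) * a = 0
  mul_zero : ∀ a : S, a * (0 : S) = 0
  le_iff : ∀ a b : S, a ≤ b ↔ a = b * (a⁻¹ * a)

variable {S : Type*} [InverseMeetSemigroup S]

/-- The Lenz arrow relation: `a → b` iff every nonzero `x ≤ a` satisfies `x ⊓ b ≠ 0`. -/
def LenzArrow (a b : S) : Prop := ∀ x : S, x ≠ 0 → x ≤ a → x ⊓ b ≠ 0
section Aux
variable {S : Type*} [InverseMeetSemigroup S]

private lemma imv (a : S) : a * a⁻¹ * a = a := InverseMeetSemigroup.mul_inv_mul a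
private lemma ivm (a : S) : a⁻¹ * a * a⁻¹ = a⁻¹ := InverseMeetSemigroup.inv_mul_inv a
private lemma icomm (e f : S) (he : e * e = e) (hf : f * f = f) : e * f = f * e :=
  InverseMeetSemigroup.idem_comm e f he hf
private lemma leiff (a b : S) : a ≤ b ↔ a = b * (a⁻¹ * a) := InverseMeetSemigroup.le_iff a b

private lemma idem_im (a : S) : (a⁻¹ * a) * (a⁻¹ * a) = a⁻¹ * a := by
  calc (a⁻¹ * a) * (a⁻¹ * a) = (a⁻¹ * a * a⁻¹) * a := by simp only [mul_assoc]
  _ = a⁻¹ * a := by rw [ivm]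

private lemma idem_mi (a : S) : (a * a⁻¹) * (a * a⁻¹) = a * a⁻¹ := by
  calc (a * a⁻¹) * (a * a⁻¹) = (a * a⁻¹ * a) * a⁻¹ := by simp only [mul_assoc]
  _ = a * a⁻¹ := by rw [imv]

private lemma lenz_invu {a b : S} (h1 : a * b * a = a) (h2 : b * a * b = b) : b = a⁻¹ := by
  have hba : (b * a) * (b * a) = b * a := by
    calc (b * a) * (b * a) = (b * a * b) * a := by simp only [mul_assoc]
    _ = b * a := by rw [h2]
  have hab : (a * b) * (a * b) = a * b := by
    calc (a * b) * (a * b) = (a * b * a) * b := by simp only [mul_assoc]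
    _ = a * b := by rw [h1]
  have e1 : b = a⁻¹ * (a * b) := by
    calc b = b * a * b := h2.symm
    _ = b * (a * a⁻¹ * a) * b := by rw [imv]
    _ = (b * a) * ((a⁻¹ * a) * b) := by simp only [mul_assoc]
    _ = ((b * a) * (a⁻¹ * a)) * b := by simp only [mul_assoc]
    _ = ((a⁻¹ * a) * (b * a)) * b := by rw [icomm _ _ hba (idem_im a)]
    _ = a⁻¹ * ((a * b * a) * b) := by simp only [mul_assoc]
    _ = a⁻¹ * (a * b) := by rw [h1]
  have e2 : a⁻¹ = a⁻¹ * (a * b) := by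
    calc a⁻¹ = a⁻¹ * a * a⁻¹ := (ivm a).symm
    _ = a⁻¹ * (a * b * a) * a⁻¹ := by rw [h1]
    _ = a⁻¹ * ((a * b) * (a * a⁻¹)) := by simp only [mul_assoc]
    _ = a⁻¹ * ((a * a⁻¹) * (a * b)) := by rw [icomm _ _ hab (idem_mi a)]
    _ = (a⁻¹ * a * a⁻¹) * (a * b) := by simp only [mul_assoc]
    _ = a⁻¹ * (a * b) := by rw [ivm]
  rw [e1, ← e2]

private lemma mul_inv_rev' (a b : S) : (a * b)⁻¹ = b⁻¹ * a⁻¹ := by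
  have h1 : (a * b) * (b⁻¹ * a⁻¹) * (a * b) = a * b := by
    calc (a * b) * (b⁻¹ * a⁻¹) * (a * b)
        = a * ((b * b⁻¹) * (a⁻¹ * a)) * b := by simp only [mul_assoc]
    _ = a * ((a⁻¹ * a) * (b * b⁻¹)) * b := by rw [icomm _ _ (idem_mi b) (idem_im a)]
    _ = (a * a⁻¹ * a) * (b * b⁻¹ * b) := by simp only [mul_assoc]
    _ = a * b := by rw [imv, imv]
  have h2 : (b⁻¹ * a⁻¹) * (a * b) * (b⁻¹ * a⁻¹) = b⁻¹ * a⁻¹ := by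
    calc (b⁻¹ * a⁻¹) * (a * b) * (b⁻¹ * a⁻¹)
        = b⁻¹ * ((a⁻¹ * a) * (b * b⁻¹)) * a⁻¹ := by simp only [mul_assoc]
    _ = b⁻¹ * ((b * b⁻¹) * (a⁻¹ * a)) * a⁻¹ := by rw [icomm _ _ (idem_im a) (idem_mi b)]
    _ = (b⁻¹ * b * b⁻¹) * (a⁻¹ * a * a⁻¹) := by simp only [mul_assoc]
    _ = b⁻¹ * a⁻¹ := by rw [ivm, ivm]
  exact (lenz_invu h1 h2).symm

private lemma inv_of_idem {e : S} (he : e * e = e) : e⁻¹ = e := by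
  have h1 : e * e * e = e := by rw [he, he]
  exact (lenz_invu h1 h1).symm

private lemma le_of_eq_mul_idem {x y e : S} (hx : x = y * e) (he : e * e = e) : x ≤ y := by
  rw [leiff]
  have hxinv : x⁻¹ = e * y⁻¹ := by rw [hx, mul_inv_rev', inv_of_idem he]
  calc x = y * e := hx
  _ = (y * y⁻¹ * y) * e := by rw [imv]
  _ = y * ((y⁻¹ * y) * e) := by simp only [mul_assoc]
  _ = y * ((y⁻¹ * y) * (e * e)) := by rw [he]
  _ = y * (((y⁻¹ * y) * e) * e) := by simp only [mul_assoc]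
  _ = y * ((e * (y⁻¹ * y)) * e) := by rw [icomm _ _ (idem_im y) he]
  _ = y * (e * y⁻¹ * (y * e)) := by simp only [mul_assoc]
  _ = y * (x⁻¹ * x) := by rw [← hxinv, ← hx]

private lemma lenz_mulr {x y : S} (h : x ≤ y) (c : S) : x * c ≤ y * c := by
  have hx : x = y * (x⁻¹ * x) := (leiff x y).mp h
  have he := idem_im x
  have hkey : x * c = (y * c) * (c⁻¹ * (x⁻¹ * x) * c) := by
    calc x * c = y * (x⁻¹ * x) * c := by rw [← hx]
    _ = y * ((x⁻¹ * x) * (c * c⁻¹ * c)) := by rw [imv]; simp only [mul_assoc]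
    _ = y * (((x⁻¹ * x) * (c * c⁻¹)) * c) := by simp only [mul_assoc]
    _ = y * (((c * c⁻¹) * (x⁻¹ * x)) * c) := by rw [icomm _ _ he (idem_mi c)]
    _ = (y * c) * (c⁻¹ * (x⁻¹ * x) * c) := by simp only [mul_assoc]
  have hidem : (c⁻¹ * (x⁻¹ * x) * c) * (c⁻¹ * (x⁻¹ * x) * c) = c⁻¹ * (x⁻¹ * x) * c := by
    calc (c⁻¹ * (x⁻¹ * x) * c) * (c⁻¹ * (x⁻¹ * x) * c)
        = c⁻¹ * ((x⁻¹ * x) * ((c * c⁻¹) * ((x⁻¹ * x) * c))) := by simp only [mul_assoc]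
    _ = c⁻¹ * ((x⁻¹ * x) * (((c * c⁻¹) * (x⁻¹ * x)) * c)) := by simp only [mul_assoc]
    _ = c⁻¹ * ((x⁻¹ * x) * (((x⁻¹ * x) * (c * c⁻¹)) * c)) := by
          rw [icomm _ _ (idem_mi c) he]
    _ = c⁻¹ * (((x⁻¹ * x) * (x⁻¹ * x)) * (c * c⁻¹ * c)) := by simp only [mul_assoc]
    _ = c⁻¹ * (x⁻¹ * x) * c := by rw [he, imv]; simp only [mul_assoc]
  exact le_of_eq_mul_idem hkey hidem

private lemma eq_zero_of_le_zero {x : S} (h : x ≤ (0 : S)) : x = 0 := by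
  have := (leiff x 0).mp h
  rwa [InverseMeetSemigroup.zero_mul] at this

end Aux

/-- The Lenz arrow is compatible with right multiplication. -/
theorem lenzArrow_mul_right (a b c : S) (hab : LenzArrow a b)
    (hac : a * c ≠ 0) (hbc : b * c ≠ 0) : LenzArrow (a * c) (b * c) := by
  intro x hx hxac
  -- x * c⁻¹ * c = x
  have hxe : x = (a * c) * (x⁻¹ * x) := (leiff x (a * c)).mp hxac
  have hxc : x * c⁻¹ * c = x := by
    calc x * c⁻¹ * c = ((a * c) * (x⁻¹ * x)) * c⁻¹ * c := by rw [← hxe]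
    _ = (a * c) * ((x⁻¹ * x) * (c⁻¹ * c)) := by simp only [mul_assoc]
    _ = (a * c) * ((c⁻¹ * c) * (x⁻¹ * x)) := by rw [icomm _ _ (idem_im x) (idem_im c)]
    _ = (a * (c * c⁻¹ * c)) * (x⁻¹ * x) := by simp only [mul_assoc]
    _ = (a * c) * (x⁻¹ * x) := by rw [imv]
    _ = x := hxe.symm
  have hxcne : x * c⁻¹ ≠ 0 := by
    intro h0
    apply hx
    rw [← hxc, h0, InverseMeetSemigroup.zero_mul]
  have hxca : x * c⁻¹ ≤ a := by
    have h1 : x * c⁻¹ ≤ (a * c) * c⁻¹ := lenz_mulr hxac c⁻¹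
    have h2 : (a * c) * c⁻¹ ≤ a :=
      le_of_eq_mul_idem (by simp only [mul_assoc]) (idem_mi c)
    exact h1.trans h2
  have hz : (x * c⁻¹) ⊓ b ≠ 0 := hab (x * c⁻¹) hxcne hxca
  set z := (x * c⁻¹) ⊓ b with hzdef
  have hz1 : z ≤ x * c⁻¹ := inf_le_left
  have hz2 : z ≤ b := inf_le_right
  have hzcx : z * c ≤ x := by
    have := lenz_mulr hz1 c
    rwa [hxc] at this
  have hzcbc : z * c ≤ b * c := lenz_mulr hz2 c
  -- z * c ≠ 0
  have hf : z = (x * c⁻¹) * (z⁻¹ * z) := (leiff z (x * c⁻¹)).mp hz1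
  have hzcc : z * c * c⁻¹ = z := by
    calc z * c * c⁻¹ = ((x * c⁻¹) * (z⁻¹ * z)) * c * c⁻¹ := by rw [← hf]
    _ = (x * c⁻¹) * ((z⁻¹ * z) * (c * c⁻¹)) := by simp only [mul_assoc]
    _ = (x * c⁻¹) * ((c * c⁻¹) * (z⁻¹ * z)) := by rw [icomm _ _ (idem_im z) (idem_mi c)]
    _ = (x * (c⁻¹ * c * c⁻¹)) * (z⁻¹ * z) := by simp only [mul_assoc]
    _ = (x * c⁻¹) * (z⁻¹ * z) := by rw [ivm]
    _ = z := hf.symm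
  have hzcne : z * c ≠ 0 := by
    intro h0
    apply hz
    rw [hzdef] at hzcc ⊢
    rw [← hzcc, h0, InverseMeetSemigroup.zero_mul]
  intro h0
  apply hzcne
  exact eq_zero_of_le_zero (h0 ▸ le_inf hzcx hzcbc)
end

section
/- In the quotient S/↔ of an inverse ∧-semigroup S with zero by the relation ↔, binary meets exist and λ(s ∧ t) = λ(s) ∧ λ(t). -/
variable {S : Type*} [InverseMeetSemigroup S]

/-- An inverse semigroup with zero, equipped with its natural partial order:
`a ≤ b ↔ a = b * (a⁻¹ * a)`. -/
class InverseZeroSemigroup (S : Type*) extends Semigroup S, Zero S, Inv S, PartialOrder S where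
  mul_inv_mul : ∀ a : S, a * a⁻¹ * a = a
  inv_mul_inv : ∀ a : S, a⁻¹ * a * a⁻¹ = a⁻¹
  idem_comm : ∀ e f : S, e * e = e → f * f = f → e * f = f * e
  zero_mul : ∀ a : S, (0 : S) * a = 0
  mul_zero : ∀ a : S, a * (0 : S) = 0
  le_iff : ∀ a b : S, a ≤ b ↔ a = b * (a⁻¹ * a)

namespace InverseMeetSemigroup

lemma inv_unique (a b : S) (h1 : a * b * a = a) (h2 : b * a * b = b) : b = a⁻¹ := by
  have hc1 : a * a⁻¹ * a = a := mul_inv_mul a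
  have hc2 : a⁻¹ * a * a⁻¹ = a⁻¹ := inv_mul_inv a
  set c := a⁻¹ with hc
  have iba : (b * a) * (b * a) = b * a := by
    calc (b * a) * (b * a) = b * (a * b * a) := by simp only [mul_assoc]
    _ = b * a := by rw [h1]
  have ica : (c * a) * (c * a) = c * a := by
    calc (c * a) * (c * a) = c * (a * c * a) := by simp only [mul_assoc]
    _ = c * a := by rw [hc1]
  have iab : (a * b) * (a * b) = a * b := by
    calc (a * b) * (a * b) = a * (b * a * b) := by simp only [mul_assoc]
    _ = a * b := by rw [h2]
  have iac : (a * c) * (a * c) = a * c := by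
    calc (a * c) * (a * c) = a * (c * a * c) := by simp only [mul_assoc]
    _ = a * c := by rw [hc2]
  calc b = b * a * b := h2.symm
  _ = b * (a * c * a) * b := by rw [hc1]
  _ = ((b * a) * (c * a)) * b := by simp only [mul_assoc]
  _ = ((c * a) * (b * a)) * b := by rw [idem_comm _ _ iba ica]
  _ = c * ((a * b) * (a * b)) := by simp only [mul_assoc]
  _ = c * (a * b) := by rw [iab]
  _ = (c * a * c) * (a * b) := by rw [hc2]
  _ = c * ((a * c) * (a * b)) := by simp only [mul_assoc]
  _ = c * ((a * b) * (a * c)) := by rw [idem_comm _ _ iac iab]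
  _ = c * (a * b * a) * c := by simp only [mul_assoc]
  _ = c * a * c := by rw [h1]
  _ = c := hc2

lemma mul_idem_le (a e : S) (he : e * e = e) : a * e ≤ a := by
  have hcomm : e * (a⁻¹ * a) = (a⁻¹ * a) * e := by
    refine idem_comm _ _ he ?_
    calc (a⁻¹ * a) * (a⁻¹ * a) = (a⁻¹ * a * a⁻¹) * a := by simp only [mul_assoc]
    _ = a⁻¹ * a := by rw [inv_mul_inv]
  have hinv : e * a⁻¹ = (a * e)⁻¹ := by
    refine inv_unique _ _ ?_ ?_
    · calc (a * e) * (e * a⁻¹) * (a * e) = a * (e * e) * (a⁻¹ * a) * e := by simp only [mul_assoc]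
      _ = a * (e * (a⁻¹ * a)) * e := by rw [he]; simp only [mul_assoc]
      _ = a * ((a⁻¹ * a) * e) * e := by rw [hcomm]
      _ = (a * a⁻¹ * a) * (e * e) := by simp only [mul_assoc]
      _ = a * e := by rw [he, mul_inv_mul]
    · calc (e * a⁻¹) * (a * e) * (e * a⁻¹) = e * ((a⁻¹ * a) * (e * e)) * a⁻¹ := by simp only [mul_assoc]
      _ = e * ((a⁻¹ * a) * e) * a⁻¹ := by rw [he]
      _ = e * (e * (a⁻¹ * a)) * a⁻¹ := by rw [hcomm]
      _ = (e * e) * (a⁻¹ * a * a⁻¹) := by simp only [mul_assoc]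
      _ = e * a⁻¹ := by rw [he, inv_mul_inv]
  rw [le_iff, ← hinv]
  refine Eq.symm ?_
  calc a * (e * a⁻¹ * (a * e)) = a * (e * (a⁻¹ * a) * e) := by simp only [mul_assoc]
  _ = a * ((a⁻¹ * a) * e * e) := by rw [hcomm]
  _ = (a * a⁻¹ * a) * (e * e) := by simp only [mul_assoc]
  _ = a * e := by rw [he, mul_inv_mul]

lemma le_zero_eq {y : S} (h : y ≤ (0 : S)) : y = 0 := by
  rw [le_iff] at h
  rw [h, zero_mul]

end InverseMeetSemigroup

/-- In the quotient `S/↔` (here presented as a surjective multiplicative,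
zero- and inverse-preserving map `λ` with kernel `↔`, onto an inverse
semigroup with zero carrying its natural partial order), binary meets exist
and `λ (s ⊓ t)` is the meet of `λ s` and `λ t`. -/
theorem quotient_meet {T : Type*} [InverseZeroSemigroup T]
    (lam : S → T)
    (hmul : ∀ x y : S, lam (x * y) = lam x * lam y)
    (hzero : lam (0 : S) = 0)
    (hinv : ∀ x : S, lam x⁻¹ = (lam x)⁻¹)
    (hsurj : Function.Surjective lam)
    (hker : ∀ x y : S, lam x = lam y ↔ (LenzArrow x y ∧ LenzArrow y x))
    (s t : S) :
    IsGLB ({lam s, lam t} : Set T) (lam (s ⊓ t)) := by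
  classical
  have hmono : ∀ w w' : S, w ≤ w' → lam w ≤ lam w' := by
    intro w w' h
    rw [InverseMeetSemigroup.le_iff] at h
    rw [InverseZeroSemigroup.le_iff]
    calc lam w = lam (w' * (w⁻¹ * w)) := by rw [← h]
    _ = lam w' * ((lam w)⁻¹ * lam w) := by rw [hmul, hmul, hinv]
  constructor
  · intro x hx
    rw [Set.mem_insert_iff, Set.mem_singleton_iff] at hx
    rcases hx with rfl | rfl
    · exact hmono _ _ inf_le_left
    · exact hmono _ _ inf_le_right
  · intro c hc
    have hcs : c ≤ lam s := hc (Set.mem_insert _ _)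
    have hct : c ≤ lam t := hc (Set.mem_insert_of_mem _ rfl)
    obtain ⟨u, rfl⟩ := hsurj c
    have hidem : ∀ w : S, (w⁻¹ * w) * (w⁻¹ * w) = w⁻¹ * w := by
      intro w
      calc (w⁻¹ * w) * (w⁻¹ * w) = (w⁻¹ * w * w⁻¹) * w := by simp only [mul_assoc]
      _ = w⁻¹ * w := by rw [InverseMeetSemigroup.inv_mul_inv]
    set u₁ := s * (u⁻¹ * u) with hu₁def
    have hu1 : lam u₁ = lam u := by
      rw [InverseZeroSemigroup.le_iff] at hcs
      rw [hu₁def, hmul, hmul, hinv]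
      exact hcs.symm
    have hu1s : u₁ ≤ s := InverseMeetSemigroup.mul_idem_le s _ (hidem u)
    set v := t * (u₁⁻¹ * u₁) with hvdef
    have hv : lam v = lam u := by
      rw [InverseZeroSemigroup.le_iff] at hct
      rw [hvdef, hmul, hmul, hinv, hu1]
      exact hct.symm
    have hvt : v ≤ t := InverseMeetSemigroup.mul_idem_le t _ (hidem u₁)
    have harr : LenzArrow u₁ v := ((hker u₁ v).mp (hu1.trans hv.symm)).1
    have key : lam u₁ = lam (u₁ ⊓ t) := by
      rw [hker]
      constructor
      · intro x hx hxle
        have h1 : x ⊓ v ≠ 0 := harr x hx hxle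
        intro h0
        apply h1
        apply InverseMeetSemigroup.le_zero_eq
        rw [← h0]
        exact le_inf inf_le_left
          (le_inf (le_trans inf_le_left hxle) (le_trans inf_le_right hvt))
      · intro x hx hxle
        have hxu : x ≤ u₁ := le_trans hxle inf_le_left
        rw [inf_eq_left.mpr hxu]
        exact hx
    calc lam u = lam u₁ := hu1.symm
    _ = lam (u₁ ⊓ t) := key
    _ ≤ lam (s ⊓ t) := hmono _ _ (inf_le_inf_right t hu1s)
end

section
/- An inverse ∧-semigroup S with zero is separative (i.e., a ↔ b implies a = b) if and only if for all a, b ∈ S, a ≤ b ⇔ a → b. -/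
variable {S : Type*} [InverseMeetSemigroup S]

/-- `S` is separative (`a ↔ b` implies `a = b`) iff for all `a b`,
`a ≤ b ⇔ a → b`. -/
theorem separative_iff (S : Type*) [InverseMeetSemigroup S] :
    (∀ a b : S, LenzArrow a b → LenzArrow b a → a = b) ↔
      (∀ a b : S, a ≤ b ↔ LenzArrow a b) := by
  constructor
  · intro hsep a b
    constructor
    · intro hab x hx hxa
      rw [inf_eq_left.mpr (hxa.trans hab)]
      exact hx
    · intro hab
      have h1 : LenzArrow a (a ⊓ b) := by
        intro x hx hxa
        have hx2 : x ⊓ (a ⊓ b) = x ⊓ b := by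
          rw [← inf_assoc, inf_eq_left.mpr hxa]
        rw [hx2]
        exact hab x hx hxa
      have h2 : LenzArrow (a ⊓ b) a := by
        intro x hx hxab
        rw [inf_eq_left.mpr (hxab.trans inf_le_left)]
        exact hx
      have := hsep a (a ⊓ b) h1 h2
      rw [this]
      exact inf_le_right
  · intro h a b hab hba
    exact le_antisymm ((h a b).mpr hab) ((h b a).mpr hba)
end

section
/- For elements a, b in an inverse ∧-semigroup with zero, every ultrafilter containing a also contains b (i.e., V_a ⊆ V_b) if and only if a → b. -/
variable {S : Type*} [InverseMeetSemigroup S]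

/-- A filter: a nonempty, downward directed, upward closed subset not containing `0`. -/
def IsFilt (F : Set S) : Prop :=
  F.Nonempty ∧ (0 : S) ∉ F ∧
  (∀ x ∈ F, ∀ y : S, x ≤ y → y ∈ F) ∧
  (∀ x ∈ F, ∀ y ∈ F, ∃ z ∈ F, z ≤ x ∧ z ≤ y)

/-- An ultrafilter: a maximal filter. -/
def IsUltra (F : Set S) : Prop :=
  IsFilt F ∧ ∀ G : Set S, IsFilt G → F ⊆ G → G = F

private lemma ims_zero_le (b : S) : (0 : S) ≤ b := by
  rw [InverseMeetSemigroup.le_iff]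
  simp [InverseMeetSemigroup.mul_zero]

private lemma ims_le_zero {x : S} (h : x ≤ 0) : x = 0 :=
  le_antisymm h (ims_zero_le x)

private lemma exists_ultra (x : S) (hx : x ≠ 0) : ∃ F : Set S, IsUltra F ∧ x ∈ F := by
  have hprin : IsFilt {y : S | x ≤ y} := by
    refine ⟨⟨x, le_refl x⟩, fun h0 => hx (ims_le_zero h0), ?_, ?_⟩
    · exact fun u hu y hy => le_trans hu hy
    · exact fun u hu y hy => ⟨x, le_refl x, hu, hy⟩
  have hchaincond : ∀ c ⊆ {F : Set S | IsFilt F}, IsChain (· ⊆ ·) c → c.Nonempty →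
      ∃ ub ∈ {F : Set S | IsFilt F}, ∀ s ∈ c, s ⊆ ub := by
    intro c hc hchain hne
    obtain ⟨F0, hF0⟩ := hne
    refine ⟨⋃₀ c, ⟨?_, ?_, ?_, ?_⟩, fun s hs => Set.subset_sUnion_of_mem hs⟩
    · obtain ⟨y, hy⟩ := (hc hF0).1
      exact ⟨y, F0, hF0, hy⟩
    · rintro ⟨F, hF, h0⟩
      exact (hc hF).2.1 h0
    · rintro u ⟨F, hF, hu⟩ y hy
      exact ⟨F, hF, (hc hF).2.2.1 u hu y hy⟩
    · rintro u ⟨F, hF, hu⟩ v ⟨G, hG, hv⟩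
      rcases hchain.total hF hG with h | h
      · obtain ⟨z, hz, h1, h2⟩ := (hc hG).2.2.2 u (h hu) v hv
        exact ⟨z, ⟨G, hG, hz⟩, h1, h2⟩
      · obtain ⟨z, hz, h1, h2⟩ := (hc hF).2.2.2 u hu v (h hv)
        exact ⟨z, ⟨F, hF, hz⟩, h1, h2⟩
  obtain ⟨m, hsub, hm⟩ := zorn_subset_nonempty {F : Set S | IsFilt F} hchaincond _ hprin
  exact ⟨m, ⟨hm.1, fun G hG hmG => subset_antisymm (hm.2 hG hmG) hmG⟩, hsub (le_refl x)⟩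

/-- `V_a ⊆ V_b` (every ultrafilter containing `a` contains `b`) iff `a → b`. -/
theorem ultrafilter_subset_iff_lenzArrow (a b : S) :
    (∀ F : Set S, IsUltra F → a ∈ F → b ∈ F) ↔ LenzArrow a b := by
  constructor
  · intro h x hx hxa hxb
    obtain ⟨F, hF, hxF⟩ := exists_ultra x hx
    have haF : a ∈ F := hF.1.2.2.1 x hxF a hxa
    have hbF : b ∈ F := h F hF haF
    obtain ⟨z, hzF, hzx, hzb⟩ := hF.1.2.2.2 x hxF b hbF
    have : z = 0 := ims_le_zero (le_of_le_of_eq (le_inf hzx hzb) hxb)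
    exact hF.1.2.1 (this ▸ hzF)
  · intro harr F hF haF
    -- every x ∈ F meets b nontrivially
    have key : ∀ x ∈ F, x ⊓ b ≠ 0 := by
      intro x hxF
      obtain ⟨z, hzF, hzx, hza⟩ := hF.1.2.2.2 x hxF a haF
      have hz0 : z ≠ 0 := fun h => hF.1.2.1 (h ▸ hzF)
      have hzb := harr z hz0 hza
      intro hxb
      exact hzb (ims_le_zero (le_trans (inf_le_inf_right b hzx) (le_of_eq hxb)))
    set G : Set S := {y : S | ∃ x ∈ F, x ⊓ b ≤ y} with hGdef
    have hGfilt : IsFilt G := by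
      obtain ⟨w, hw⟩ := hF.1.1
      refine ⟨⟨b, w, hw, inf_le_right⟩, ?_, ?_, ?_⟩
      · rintro ⟨x, hxF, hle⟩
        exact key x hxF (ims_le_zero hle)
      · rintro u ⟨x, hxF, hle⟩ y hy
        exact ⟨x, hxF, le_trans hle hy⟩
      · rintro u ⟨x, hxF, hux⟩ v ⟨y, hyF, hvy⟩
        obtain ⟨z, hzF, hzx, hzy⟩ := hF.1.2.2.2 x hxF y hyF
        exact ⟨z ⊓ b, ⟨z, hzF, le_refl _⟩,
          le_trans (inf_le_inf_right b hzx) hux,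
          le_trans (inf_le_inf_right b hzy) hvy⟩
    have hFG : F ⊆ G := fun x hxF => ⟨x, hxF, inf_le_left⟩
    have : G = F := hF.2 G hGfilt hFG
    have hbG : b ∈ G := ⟨a, haF, inf_le_right⟩
    exact this ▸ hbG
end

section
/- If F is an idempotent filter in an inverse ∧-semigroup S (a filter that is an inverse subsemigroup), then E(F), the set of idempotents in F, is a filter in the semilattice E(S) of idempotents, and F = E(F)↑. Moreover F is an ultrafilter in S if and only if E(F) is an ultrafilter in E(S). -/
variable {S : Type*} [InverseMeetSemigroup S]

/-- The upward closure of a set. -/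
def upClo (X : Set S) : Set S := {y : S | ∃ x ∈ X, x ≤ y}

/-- A filter in the semilattice `E(S)` of idempotents of `S`: a nonempty,
downward directed, upward closed (within the idempotents) set of nonzero
idempotents. -/
def IsFiltIdem (F : Set S) : Prop :=
  (∀ x ∈ F, x * x = x) ∧ F.Nonempty ∧ (0 : S) ∉ F ∧
  (∀ x ∈ F, ∀ y : S, y * y = y → x ≤ y → y ∈ F) ∧
  (∀ x ∈ F, ∀ y ∈ F, ∃ z ∈ F, z ≤ x ∧ z ≤ y)

/-- An ultrafilter in `E(S)`: a maximal filter of idempotents. -/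
def IsUltraIdem (F : Set S) : Prop :=
  IsFiltIdem F ∧ ∀ G : Set S, IsFiltIdem G → F ⊆ G → G = F

lemma aux_idem_of_le_idem (a e : S) (he : e * e = e) (h : a ≤ e) : a * a = a := by
  have hg : (a⁻¹ * a) * (a⁻¹ * a) = a⁻¹ * a := by
    rw [mul_assoc, ← mul_assoc a, InverseMeetSemigroup.mul_inv_mul]
  have ha : a = e * (a⁻¹ * a) := (InverseMeetSemigroup.le_iff a e).mp h
  have hcomm := InverseMeetSemigroup.idem_comm e (a⁻¹ * a) he hg
  have key : (e * (a⁻¹ * a)) * (e * (a⁻¹ * a)) = e * (a⁻¹ * a) := by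
    rw [mul_assoc, ← mul_assoc (a⁻¹ * a), ← hcomm, mul_assoc e (a⁻¹ * a), hg,
      ← mul_assoc, he]
  rw [← ha] at key
  exact key

lemma aux_eq_zero_of_le_zero (a : S) (h : a ≤ 0) : a = 0 := by
  have := (InverseMeetSemigroup.le_iff a 0).mp h
  rwa [InverseMeetSemigroup.zero_mul] at this

lemma aux_filtIdem (F : Set S) (hF : IsFilt F) (hidem : ∃ e ∈ F, e * e = e) :
    IsFiltIdem {e ∈ F | e * e = e} := by
  obtain ⟨hne, h0, hup, hdir⟩ := hF
  refine ⟨fun x hx => hx.2, ?_, fun h => h0 h.1, ?_, ?_⟩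
  · obtain ⟨e, he, hee⟩ := hidem; exact ⟨e, he, hee⟩
  · exact fun x hx y hy hxy => ⟨hup x hx.1 y hxy, hy⟩
  · intro x hx y hy
    obtain ⟨z, hz, hzx, hzy⟩ := hdir x hx.1 y hy.1
    exact ⟨z, ⟨hz, aux_idem_of_le_idem z x hx.2 hzx⟩, hzx, hzy⟩

lemma aux_eq_upClo (F : Set S) (hF : IsFilt F) (hidem : ∃ e ∈ F, e * e = e) :
    F = upClo {e ∈ F | e * e = e} := by
  obtain ⟨hne, h0, hup, hdir⟩ := hF
  apply Set.Subset.antisymm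
  · intro a ha
    obtain ⟨e, he, hee⟩ := hidem
    obtain ⟨z, hz, hza, hze⟩ := hdir a ha e he
    exact ⟨z, ⟨hz, aux_idem_of_le_idem z e hee hze⟩, hza⟩
  · rintro a ⟨x, hx, hxa⟩
    exact hup x hx.1 a hxa

lemma aux_upClo_filt (G : Set S) (hG : IsFiltIdem G) : IsFilt (upClo G) := by
  obtain ⟨hidem, hne, h0, hup, hdir⟩ := hG
  refine ⟨?_, ?_, ?_, ?_⟩
  · obtain ⟨x, hx⟩ := hne; exact ⟨x, x, hx, le_refl x⟩
  · rintro ⟨x, hx, hx0⟩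
    exact h0 (aux_eq_zero_of_le_zero x hx0 ▸ hx)
  · rintro x ⟨g, hg, hgx⟩ y hxy
    exact ⟨g, hg, le_trans hgx hxy⟩
  · rintro x ⟨g, hg, hgx⟩ y ⟨h, hh, hhy⟩
    obtain ⟨k, hk, hkg, hkh⟩ := hdir g hg h hh
    exact ⟨k, ⟨k, hk, le_refl k⟩, le_trans hkg hgx, le_trans hkh hhy⟩

/-- If `F` is an idempotent filter in `S` then its set of idempotents
`E(F)` is a filter in `E(S)`, `F = E(F)↑`, and `F` is an ultrafilter in
`S` iff `E(F)` is an ultrafilter in `E(S)`. -/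
theorem idempotent_filter_props (F : Set S) (hF : IsFilt F)
    (hidem : ∃ e ∈ F, e * e = e) :
    IsFiltIdem {e ∈ F | e * e = e} ∧
    F = upClo {e ∈ F | e * e = e} ∧
    (IsUltra F ↔ IsUltraIdem {e ∈ F | e * e = e}) := by
  refine ⟨aux_filtIdem F hF hidem, aux_eq_upClo F hF hidem, ?_, ?_⟩
  · rintro ⟨_, hmax⟩
    refine ⟨aux_filtIdem F hF hidem, fun G hG hsub => ?_⟩
    have hFG : F ⊆ upClo G := by
      rw [aux_eq_upClo F hF hidem]
      rintro a ⟨x, hx, hxa⟩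
      exact ⟨x, hsub hx, hxa⟩
    have hEq : upClo G = F := hmax (upClo G) (aux_upClo_filt G hG) hFG
    apply Set.Subset.antisymm _ hsub
    intro x hx
    have hxF : x ∈ F := hEq ▸ (⟨x, hx, le_refl x⟩ : x ∈ upClo G)
    exact ⟨hxF, hG.1 x hx⟩
  · rintro ⟨_, hmax⟩
    refine ⟨hF, fun G hG hFG => ?_⟩
    have hGidem : ∃ e ∈ G, e * e = e := by
      obtain ⟨e, he, hee⟩ := hidem; exact ⟨e, hFG he, hee⟩
    have hsub : {e ∈ F | e * e = e} ⊆ {e ∈ G | e * e = e} :=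
      fun x hx => ⟨hFG hx.1, hx.2⟩
    have hEq := hmax {e ∈ G | e * e = e} (aux_filtIdem G hG hGidem) hsub
    rw [aux_eq_upClo G hG hGidem, hEq, ← aux_eq_upClo F hF hidem]
end
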